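/- Let m ≥ 1 and n ≥ 1 be integers, and set A = 2(2m³ + (−4n+1)m² + n(4n−1)m − 2n³), B = −2(6m³ − (12n+1)m² + (8n² − n − 2)m − 2n³ + n), C = (2m−1)(6m² − (10n+1)m + 4n² − n − 1), D = (2m−1)²(n−m). Then for real numbers x₁, x₂, c with x₁ ≠ 0 and x₂ ≠ 0, the triple (x₁, x₂, c) solves the Einstein system for B(m,n) if and only if c = (2n·x₁² − 2m + 1)/(4(2m−2n−1)·x₁), x₂ = (2(m−n)·x₁² − 2(2m−2n−1)·x₁ + 2m − 1)/((2n+1)·x₁), and (x₁ − 1)·(A·x₁³ + B·x₁² + C·x₁ + D) = 0. -/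

import Mathlib

/-- For m, n ≥ 1 and x₁ ≠ 0, x₂ ≠ 0, the triple (x₁, x₂, c) solves the Einstein
system for B(m,n) iff c and x₂ are given by the stated rational expressions in x₁ and
x₁ satisfies the quartic equation (x₁ − 1)(A x₁³ + B x₁² + C x₁ + D) = 0. -/
theorem einstein_Bmn_reduction (m n : ℕ) (hm : 1 ≤ m) (hn : 1 ≤ n)
    (A B C D : ℝ)
    (hA : A = 2 * (2 * (m : ℝ)^3 + (-4 * (n : ℝ) + 1) * (m : ℝ)^2
      + (n : ℝ) * (4 * (n : ℝ) - 1) * (m : ℝ) - 2 * (n : ℝ)^3))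
    (hB : B = -2 * (6 * (m : ℝ)^3 - (12 * (n : ℝ) + 1) * (m : ℝ)^2
      + (8 * (n : ℝ)^2 - (n : ℝ) - 2) * (m : ℝ) - 2 * (n : ℝ)^3 + (n : ℝ)))
    (hC : C = (2 * (m : ℝ) - 1) * (6 * (m : ℝ)^2 - (10 * (n : ℝ) + 1) * (m : ℝ)
      + 4 * (n : ℝ)^2 - (n : ℝ) - 1))
    (hD : D = (2 * (m : ℝ) - 1)^2 * ((n : ℝ) - (m : ℝ))) :
    ∀ x₁ x₂ c : ℝ, x₁ ≠ 0 → x₂ ≠ 0 →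
      (((1/4) * ((2 * (n : ℝ) / (2 * (m : ℝ) - 1)) * x₁^2 - 1)
          = c * (1 - 2 * (n : ℝ) / (2 * (m : ℝ) - 1)) * x₁ ∧
        (1/4) * (((2 * (m : ℝ) + 1) / (2 * (n : ℝ) + 2)) * x₂^2 - 1)
          = c * (1 - (2 * (m : ℝ) + 1) / (2 * (n : ℝ) + 2)) * x₂ ∧
        ((m : ℝ) / (2 * (m : ℝ) - 2 * (n : ℝ) - 1)) * x₁
          - ((2 * (n : ℝ) + 1) / (2 * (2 * (m : ℝ) - 2 * (n : ℝ) - 1))) * x₂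
          = 2 * c + 1)
      ↔ (c = (2 * (n : ℝ) * x₁^2 - 2 * (m : ℝ) + 1)
            / (4 * (2 * (m : ℝ) - 2 * (n : ℝ) - 1) * x₁) ∧
         x₂ = (2 * ((m : ℝ) - (n : ℝ)) * x₁^2
            - 2 * (2 * (m : ℝ) - 2 * (n : ℝ) - 1) * x₁ + 2 * (m : ℝ) - 1)
            / ((2 * (n : ℝ) + 1) * x₁) ∧
         (x₁ - 1) * (A * x₁^3 + B * x₁^2 + C * x₁ + D) = 0)) := by
  have hd : 2*(m:ℝ) - 2*(n:ℝ) - 1 ≠ 0 := by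
    intro h
    have h' : ((2*(m:ℤ) - 2*(n:ℤ) - 1 : ℤ) : ℝ) = 0 := by push_cast; linarith
    have : (2*(m:ℤ) - 2*(n:ℤ) - 1 : ℤ) = 0 := by exact_mod_cast h'
    omega
  have hd' : 2*((m:ℝ) - (n:ℝ)) - 1 ≠ 0 := by intro h; apply hd; linarith
  have hm1 : 2*(m:ℝ) - 1 ≠ 0 := by
    have : (1:ℝ) ≤ (m:ℝ) := by exact_mod_cast hm
    intro h; linarith
  have hn1 : 2*(n:ℝ) + 2 ≠ 0 := by positivity
  have hn2 : 2*(n:ℝ) + 1 ≠ 0 := by positivity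
  intro x₁ x₂ c hx1 hx2
  subst hA hB hC hD
  constructor
  · rintro ⟨e1, e2, e3⟩
    field_simp at e1 e3
    have e1' : 2*(n:ℝ)*x₁^2 - (2*(m:ℝ)-1) = c * (2*(m:ℝ)-1-2*(n:ℝ)) * x₁ * 4 :=
      mul_right_cancel₀ hm1 (by linear_combination (2*(m:ℝ)-1) * e1)
    have e3' : (m:ℝ)*x₁*2 - (2*(n:ℝ)+1)*x₂ = (2*c+1)*(2*(2*(m:ℝ)-2*(n:ℝ)-1)) :=
      mul_left_cancel₀ hd (by linear_combination (2*(m:ℝ)-2*(n:ℝ)-1) * e3)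
    have hc : c = (2 * (n : ℝ) * x₁^2 - 2 * (m : ℝ) + 1)
        / (4 * (2 * (m : ℝ) - 2 * (n : ℝ) - 1) * x₁) := by
      rw [eq_div_iff (mul_ne_zero (mul_ne_zero (by norm_num) hd) hx1)]
      linear_combination -e1'
    have hx : x₂ = (2 * ((m : ℝ) - (n : ℝ)) * x₁^2
        - 2 * (2 * (m : ℝ) - 2 * (n : ℝ) - 1) * x₁ + 2 * (m : ℝ) - 1)
        / ((2 * (n : ℝ) + 1) * x₁) := by
      rw [eq_div_iff (mul_ne_zero hn2 hx1)]
      linear_combination (-x₁) * e3' + e1'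
    refine ⟨hc, hx, ?_⟩
    subst hc hx
    field_simp at e2
    have hK : (8 * (2*(m:ℝ) - 2*(n:ℝ) - 1) * (2*(n:ℝ)+2) * (2*(n:ℝ)+1) * x₁^2 : ℝ) ≠ 0 := by
      apply mul_ne_zero _ (pow_ne_zero 2 hx1)
      exact mul_ne_zero (mul_ne_zero (mul_ne_zero (by norm_num) hd) hn1) hn2
    apply mul_left_cancel₀ hK
    rw [mul_zero]
    linear_combination (4*(2*(n:ℝ)+2)*(2*(n:ℝ)+1)*x₁^2) * e2
  · rintro ⟨hc, hx, hq4⟩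
    subst hc hx
    refine ⟨?_, ?_, ?_⟩
    · field_simp
      ring
    · field_simp
      linear_combination (2*(2*(m:ℝ)-2*(n:ℝ)-1)) * hq4
    · field_simp
      ring
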